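/- Let q1, q2, q3, q4 be four points in the Euclidean plane ℝ² with q2 − q1 = t • (q3 − q4) for some t > 0 and q1, q2, q4 not collinear; let r_ij denote their mutual distances and suppose positive masses m1, m2, m3, m4 and real numbers λ, σ satisfy the trapezoidal central configuration equations for these distances. If m1 = m3 and m2 = m4, then the configuration is a rhombus: r12 = r23 = r34 = r14. -/

import Mathlib

private lemma cube_inv_inj {x y : ℝ} (hx : 0 < x) (hy : 0 < y)
    (h : x ^ (-3 : ℤ) = y ^ (-3 : ℤ)) : x = y := by
  have h3 : x ^ 3 = y ^ 3 := by
    rw [zpow_neg, zpow_neg, inv_inj] at h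
    exact_mod_cast h
  exact pow_left_strictMonoOn₀ (n := 3) (by norm_num) |>.injOn hx.le hy.le h3

private lemma zneg3 {x : ℝ} : x ^ (-3 : ℤ) = (x ^ 3)⁻¹ := by
  rw [zpow_neg, zpow_ofNat]

private lemma collinear_aux (q1 q2 q4 v : EuclideanSpace ℝ (Fin 2)) (s r : ℝ)
    (h2 : q2 - q1 = s • v) (h4 : q4 - q1 = r • v) :
    Collinear ℝ ({q1, q2, q4} : Set (EuclideanSpace ℝ (Fin 2))) := by
  rw [collinear_iff_of_mem (Set.mem_insert q1 _)]
  refine ⟨v, ?_⟩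
  rintro p (rfl | rfl | rfl)
  · exact ⟨0, by simp⟩
  · exact ⟨s, by rw [← h2, vadd_eq_add]; abel⟩
  · exact ⟨r, by rw [← h4, vadd_eq_add]; abel⟩

theorem rhombus_of_m1_eq_m3_m2_eq_m4
    (q1 q2 q3 q4 : EuclideanSpace ℝ (Fin 2)) (t : ℝ)
    (ht : 0 < t) (hpar : q2 - q1 = t • (q3 - q4))
    (hncol : ¬ Collinear ℝ ({q1, q2, q4} : Set (EuclideanSpace ℝ (Fin 2))))
    (m1 m2 m3 m4 lam sig : ℝ)
    (hm1 : 0 < m1) (hm2 : 0 < m2) (hm3 : 0 < m3) (hm4 : 0 < m4)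
    (h12 : m1 * m2 * (dist q1 q2 ^ (-3 : ℤ) - lam) = sig * dist q3 q4 ^ 2)
    (h34 : m3 * m4 * (dist q3 q4 ^ (-3 : ℤ) - lam) = sig * dist q1 q2 ^ 2)
    (h13 : m1 * m3 * (dist q1 q3 ^ (-3 : ℤ) - lam) = -(sig * dist q1 q2 * dist q3 q4))
    (h24 : m2 * m4 * (dist q2 q4 ^ (-3 : ℤ) - lam) = -(sig * dist q1 q2 * dist q3 q4))
    (h14 : m1 * m4 * (dist q1 q4 ^ (-3 : ℤ) - lam) = sig * dist q1 q2 * dist q3 q4)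
    (h23 : m2 * m3 * (dist q2 q3 ^ (-3 : ℤ) - lam) = sig * dist q1 q2 * dist q3 q4)
    (hm13 : m1 = m3) (hm24 : m2 = m4) :
    dist q1 q2 = dist q2 q3 ∧ dist q2 q3 = dist q3 q4 ∧ dist q3 q4 = dist q1 q4 := by
  subst hm13 hm24
  set d : EuclideanSpace ℝ (Fin 2) := q3 - q4 with hd_def
  set u : EuclideanSpace ℝ (Fin 2) := q4 - q1 with hu_def
  -- non-degeneracy
  have hind : ∀ c : ℝ, u ≠ c • d := by
    intro c hc
    exact hncol (collinear_aux q1 q2 q4 d t c hpar hc)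
  have hd0 : d ≠ 0 := by
    intro hd
    refine hncol (collinear_aux q1 q2 q4 u 0 1 ?_ (by simp [hu_def]))
    rw [hpar, hd, smul_zero, zero_smul]
  -- distances as norms
  have e12 : dist q1 q2 = t * ‖d‖ := by
    rw [dist_eq_norm, show q1 - q2 = -(t • d) by rw [← hpar]; abel, norm_neg, norm_smul,
      Real.norm_eq_abs, abs_of_pos ht]
  have e34 : dist q3 q4 = ‖d‖ := by rw [dist_eq_norm]
  have e14 : dist q1 q4 = ‖u‖ := by rw [dist_eq_norm, ← norm_neg]; congr 1; rw [hu_def]; abel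
  have e13 : dist q1 q3 = ‖u + d‖ := by
    rw [dist_eq_norm, ← norm_neg]; congr 1; rw [hu_def, hd_def]; abel
  have e24 : dist q2 q4 = ‖u - t • d‖ := by
    rw [dist_eq_norm, ← norm_neg]; congr 1
    rw [hu_def, show q2 = (q2 - q1) + q1 by abel, hpar]; abel
  have e23 : dist q2 q3 = ‖u + (1 - t) • d‖ := by
    rw [dist_eq_norm, ← norm_neg]; congr 1
    rw [hu_def, hd_def, show q2 = (q2 - q1) + q1 by abel, hpar]
    rw [sub_smul, one_smul]; abel
  -- positivity of all six distances
  have hy : (0:ℝ) < ‖d‖ := norm_pos_iff.mpr hd0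
  have hr : (0:ℝ) < ‖u‖ := norm_pos_iff.mpr (by simpa using hind 0)
  have hp : (0:ℝ) < ‖u + d‖ := norm_pos_iff.mpr (by
    intro h
    exact hind (-1) (by rw [neg_one_smul, ← sub_eq_zero]; rw [sub_neg_eq_add]; exact h))
  have hq : (0:ℝ) < ‖u - t • d‖ := norm_pos_iff.mpr (by
    intro h; exact hind t (sub_eq_zero.mp h))
  have hz : (0:ℝ) < ‖u + (1 - t) • d‖ := norm_pos_iff.mpr (by
    intro h
    exact hind (t - 1) (by
      have : u = -((1 - t) • d) := by rw [← sub_eq_zero, sub_neg_eq_add]; exact h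
      rw [this, ← neg_smul]; ring_nf))
  have hx : (0:ℝ) < t * ‖d‖ := mul_pos ht hy
  -- r14 = r23 from the equations
  have hr14r23 : dist q1 q4 = dist q2 q3 := by
    have hcan : m1 * m2 * (dist q1 q4 ^ (-3:ℤ) - lam) = m1 * m2 * (dist q2 q3 ^ (-3:ℤ) - lam) := by
      linarith [h14, h23]
    have := mul_left_cancel₀ (show (m1 * m2 : ℝ) ≠ 0 by positivity) hcan
    have heq : dist q1 q4 ^ (-3:ℤ) = dist q2 q3 ^ (-3:ℤ) := by linarith
    exact cube_inv_inj (by rw [e14]; exact hr) (by rw [e23]; exact hz) heq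
  -- inner product notation
  have n23 : ‖u + (1 - t) • d‖ ^ 2
      = ‖u‖ ^ 2 + 2 * (1 - t) * (inner ℝ u d : ℝ) + (1 - t) ^ 2 * ‖d‖ ^ 2 := by
    rw [norm_add_sq_real, real_inner_smul_right, norm_smul, Real.norm_eq_abs, mul_pow, sq_abs]
    ring
  by_cases ht1 : t = 1
  · -- parallelogram case
    subst ht1
    have g23 : dist q2 q3 = dist q1 q4 := by
      rw [e23, e14]; norm_num
    have g34 : dist q3 q4 = dist q1 q2 := by rw [e34, e12]; ring
    -- from h12 and h14 (with m4 = m2, r34 = r12) get r12 = r14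
    have hcan : m1 * m2 * (dist q1 q2 ^ (-3:ℤ) - lam) = m1 * m2 * (dist q1 q4 ^ (-3:ℤ) - lam) := by
      rw [h12, h14, g34]; ring
    have := mul_left_cancel₀ (show (m1 * m2 : ℝ) ≠ 0 by positivity) hcan
    have heq : dist q1 q2 ^ (-3:ℤ) = dist q1 q4 ^ (-3:ℤ) := by linarith
    have h1214 : dist q1 q2 = dist q1 q4 :=
      cube_inv_inj (by rw [e12]; simpa using hy) (by rw [e14]; exact hr) heq
    exact ⟨by rw [g23, h1214], by rw [g23, g34, h1214], by rw [g34, h1214]⟩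
  · -- genuine trapezoid case: derive a contradiction
    exfalso
    -- inner product value from r14 = r23
    have hrz : ‖u‖ = ‖u + (1 - t) • d‖ := by rw [← e14, ← e23, hr14r23]
    have hw : 2 * (inner ℝ u d : ℝ) = (t - 1) * ‖d‖ ^ 2 := by
      have h2 : ‖u‖ ^ 2 = ‖u + (1 - t) • d‖ ^ 2 := by rw [hrz]
      rw [n23] at h2
      have hfac : (1 - t) * (2 * (inner ℝ u d : ℝ) + (1 - t) * ‖d‖ ^ 2) = 0 := by
        linear_combination -h2
      have h1t : (1 - t) ≠ 0 := fun h => ht1 (by linarith [sub_eq_zero.mp h])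
      have := (mul_eq_zero.mp hfac).resolve_left h1t
      linarith
    -- r13^2 = r24^2 = r14^2 + t * ‖d‖^2
    have n13 : ‖u + d‖ ^ 2 = ‖u‖ ^ 2 + t * ‖d‖ ^ 2 := by
      rw [norm_add_sq_real]; linarith [hw]
    have n24 : ‖u - t • d‖ ^ 2 = ‖u‖ ^ 2 + t * ‖d‖ ^ 2 := by
      rw [norm_sub_sq_real, real_inner_smul_right, norm_smul, Real.norm_eq_abs, mul_pow, sq_abs]
      linear_combination (-t) * hw
    have hpq : ‖u + d‖ = ‖u - t • d‖ :=
      pow_left_strictMonoOn₀ (n := 2) (by norm_num) |>.injOn hp.le hq.le (by rw [n13, n24])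
    have g1324 : dist q1 q3 = dist q2 q4 := by rw [e13, e24, hpq]
    -- (m1^2 - m2^2) * (r13^{-3} - lam) = 0
    have hsplit : (m1 * m1 - m2 * m2) * (dist q1 q3 ^ (-3:ℤ) - lam) = 0 := by
      have h' := h13.trans h24.symm
      rw [g1324] at h' ⊢
      linarith [h']
    rcases mul_eq_zero.mp hsplit with hmm | hPlam
    · -- m1 = m2 : all masses equal, algebraic contradiction
      have hm12 : m1 = m2 := by
        have hfac : (m1 - m2) * (m1 + m2) = 0 := by linear_combination hmm
        rcases mul_eq_zero.mp hfac with h' | h'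
        · linarith
        · linarith
      subst hm12
      set x := dist q1 q2 with hx_def
      set y := dist q3 q4 with hy_def
      set p := dist q1 q3 with hp_def
      have hxpos : 0 < x := by rw [e12]; exact hx
      have hypos : 0 < y := by rw [e34]; exact hy
      have hppos : 0 < p := by rw [e13]; exact hp
      have hxy : x ≠ y := by
        rw [e12, e34]
        intro h
        apply ht1
        have h0 : (t - 1) * ‖d‖ = 0 := by linarith
        rcases mul_eq_zero.mp h0 with h' | h'
        · linarith
        · exact absurd h' (ne_of_gt hy)
      -- rewrite zpow
      simp only [zneg3] at h12 h34 h13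
      have hX : (x ^ 3)⁻¹ * x ^ 3 = 1 := inv_mul_cancel₀ (by positivity)
      have hY : (y ^ 3)⁻¹ * y ^ 3 = 1 := inv_mul_cancel₀ (by positivity)
      have hP : (p ^ 3)⁻¹ * p ^ 3 = 1 := inv_mul_cancel₀ (by positivity)
      set M := m1 * m1 with hM_def
      have hMpos : 0 < M := by positivity
      have E1 : M * (y ^ 3 - x ^ 3) = sig * (x ^ 3 * y ^ 3) * (y ^ 2 - x ^ 2) := by
        linear_combination (x ^ 3 * y ^ 3) * h12 - (x ^ 3 * y ^ 3) * h34
          - (M * y ^ 3) * hX + (M * x ^ 3) * hY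
      have E2 : M * (y ^ 2 + x * y + x ^ 2) = sig * (x ^ 3 * y ^ 3) * (x + y) := by
        have hyx : y - x ≠ 0 := sub_ne_zero.mpr (Ne.symm hxy)
        apply mul_left_cancel₀ hyx
        linear_combination E1
      have E3 : M * (p ^ 3 - x ^ 3) = sig * y * (x + y) * (x ^ 3 * p ^ 3) := by
        linear_combination (x ^ 3 * p ^ 3) * h12 - (x ^ 3 * p ^ 3) * h13
          - (M * p ^ 3) * hX + (M * x ^ 3) * hP
      have E4 : M * y ^ 2 * (p ^ 3 - x ^ 3) = M * (y ^ 2 + x * y + x ^ 2) * p ^ 3 := by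
        linear_combination y ^ 2 * E3 - p ^ 3 * E2
      have E5 : M * (x ^ 3 * y ^ 2 + x ^ 2 * p ^ 3 + x * y * p ^ 3) = 0 := by
        linear_combination -E4
      have E6 : 0 < M * (x ^ 3 * y ^ 2 + x ^ 2 * p ^ 3 + x * y * p ^ 3) := by positivity
      linarith
    · -- r13^{-3} = lam : sig = 0, contradiction
      have hlam : dist q1 q3 ^ (-3:ℤ) = lam := by linarith
      have hsig : sig = 0 := by
        have h0 : -(sig * dist q1 q2 * dist q3 q4) = 0 := by
          rw [← h13, hlam]; ring
        have hxpos : 0 < dist q1 q2 := by rw [e12]; exact hx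
        have hypos : 0 < dist q3 q4 := by rw [e34]; exact hy
        have := neg_eq_zero.mp h0
        rcases mul_eq_zero.mp this with h' | h'
        · rcases mul_eq_zero.mp h' with h'' | h''
          · exact h''
          · exact absurd h'' (ne_of_gt hxpos)
        · exact absurd h' (ne_of_gt hypos)
      have h14' : dist q1 q4 ^ (-3:ℤ) = lam := by
        have : m1 * m2 * (dist q1 q4 ^ (-3:ℤ) - lam) = 0 := by rw [h14, hsig]; ring
        have := mul_eq_zero.mp this
        rcases this with h' | h'
        · exact absurd h' (by positivity)
        · linarith
      have hrp : dist q1 q4 = dist q1 q3 :=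
        cube_inv_inj (by rw [e14]; exact hr) (by rw [e13]; exact hp) (by rw [h14', hlam])
      rw [e14, e13] at hrp
      rw [← hrp] at n13
      have h0 : t * ‖d‖ ^ 2 = 0 := by linarith [n13]
      have h1 : 0 < t * ‖d‖ ^ 2 := by positivity
      linarith
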